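/- Suppose a sequence of exponents (p_i) in (2,∞) satisfies the recursion 1/p_{i+1} = 1/p_i − α/(4p_i + 4 − 2α) for a fixed α ∈ (0,1) and p_1 > 2. Then (p_i) is strictly increasing and p_i → ∞ as i → ∞. -/
import Mathlib


open Filter Topology

/-- if exponents `p_i ∈ (2,∞)` satisfy
`1/p_{i+1} = 1/p_i − α/(4p_i + 4 − 2α)` for fixed `α ∈ (0,1)`, then `(p_i)` is
strictly increasing and `p_i → ∞`. -/
theorem stmt13 (α : ℝ) (hα0 : 0 < α) (hα1 : α < 1)
    (p : ℕ → ℝ) (hp : ∀ i, 2 < p i)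
    (hrec : ∀ i, 1 / p (i + 1) = 1 / p i - α / (4 * p i + 4 - 2 * α)) :
    StrictMono p ∧ Tendsto p atTop atTop := by
  have hp0 : ∀ i, 0 < p i := fun i => lt_trans two_pos (hp i)
  have hmono : ∀ i, p i < p (i + 1) := by
    intro i
    have hD : 0 < 4 * p i + 4 - 2 * α := by nlinarith [hp i]
    have h1 : 1 / p (i + 1) < 1 / p i := by
      have : 0 < α / (4 * p i + 4 - 2 * α) := div_pos hα0 hD
      rw [hrec i]; linarith
    exact lt_of_one_div_lt_one_div (hp0 (i + 1)) h1
  refine ⟨strictMono_nat_of_lt_succ hmono, ?_⟩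
  set r : ℝ := 1 - α / 6 with hr
  have hr0 : 0 ≤ r := by rw [hr]; linarith
  have hr1 : r < 1 := by rw [hr]; linarith
  have key : ∀ i, 1 / p (i + 1) ≤ r * (1 / p i) := by
    intro i
    have hq : 1 / p i < 1 / 2 := by
      rw [div_lt_div_iff₀ (hp0 i) two_pos]; linarith [hp i]
    have hD : 10 < 4 * p i + 4 - 2 * α := by nlinarith [hp i]
    have hpq : (1 / p i) * p i = 1 := by
      rw [one_div, inv_mul_cancel₀ (hp0 i).ne']
    have h2 : (1 / p i) * (4 - 2 * α) ≤ 2 := by nlinarith [one_div_pos.mpr (hp0 i)]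
    have hle : α / 6 * (1 / p i) ≤ α / (4 * p i + 4 - 2 * α) := by
      rw [div_mul_eq_mul_div, div_le_div_iff₀ (by norm_num) (by linarith)]
      nlinarith [hpq, h2, hα0.le]
    have hrw : r * (1 / p i) = 1 / p i - α / 6 * (1 / p i) := by rw [hr]; ring
    rw [hrec i, hrw]; linarith
  have hbound : ∀ i, 1 / p i ≤ (1 / p 0) * r ^ i := by
    intro i
    induction i with
    | zero => simp
    | succ n ih =>
      calc 1 / p (n + 1) ≤ r * (1 / p n) := key n
        _ ≤ r * ((1 / p 0) * r ^ n) := mul_le_mul_of_nonneg_left ih hr0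
        _ = (1 / p 0) * r ^ (n + 1) := by ring
  have hq0 : Tendsto (fun i => 1 / p i) atTop (𝓝 0) := by
    apply squeeze_zero (fun i => (one_div_pos.mpr (hp0 i)).le) hbound
    have := tendsto_pow_atTop_nhds_zero_of_lt_one hr0 hr1
    simpa using this.const_mul (1 / p 0)
  have hinv : Tendsto (fun i => (1 / p i)⁻¹) atTop atTop := by
    apply Tendsto.inv_tendsto_nhdsGT_zero
    apply tendsto_nhdsWithin_of_tendsto_nhds_of_eventually_within _ hq0
    exact Eventually.of_forall (fun i => Set.mem_Ioi.mpr (one_div_pos.mpr (hp0 i)))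
  simpa [one_div, inv_inv] using hinv
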